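/- Let θ = 0.838, Δ₁ = log(5.995θ − 1) + ∫₂^{5.995θ − 2} (log(s−1)/s) · log((5.995θ − 1)/(s+1)) ds, and Δ₂ = log((11.99θ − 2)/(3θ − 2)) + ∫₂^{5.995θ − 2} (log(s−1)/s) · log((5.995θ − 1)(5.995θ − 1 − s)/(s+1)) ds. Then Δ₁ − (1/2)Δ₂ ≥ 0.0009. -/

import Mathlib

open MeasureTheory Set intervalIntegral

/-- `Δ₁` with `θ = 0.838`. -/
noncomputable def Δ₁ : ℝ :=
  Real.log (5.995 * 0.838 - 1) +
    ∫ s in (2 : ℝ)..(5.995 * 0.838 - 2),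
      Real.log (s - 1) / s * Real.log ((5.995 * 0.838 - 1) / (s + 1))

/-- `Δ₂` with `θ = 0.838`. -/
noncomputable def Δ₂ : ℝ :=
  Real.log ((11.99 * 0.838 - 2) / (3 * 0.838 - 2)) +
    ∫ s in (2 : ℝ)..(5.995 * 0.838 - 2),
      Real.log (s - 1) / s *
        Real.log ((5.995 * 0.838 - 1) * (5.995 * 0.838 - 1 - s) / (s + 1))


noncomputable def pp (s : ℝ) : ℝ :=
  0.418260281 + 0.136912553*s - 0.248816418*s^2 + 0.08623743*s^3 - 0.011258696*s^4

noncomputable def vv (s : ℝ) : ℝ := (s+1)*(4.02381-s)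

noncomputable def r1 (s : ℝ) : ℝ :=
  -0.074832168 + 0.380172811*s - 0.19210152*s^2 + 0.04052595*s^3 - 0.005247389*s^4
noncomputable def r2 (s : ℝ) : ℝ :=
  -0.314823933 + 0.793615371*s - 0.500442195*s^2 + 0.143437697*s^3 - 0.017641252*s^4
noncomputable def r3 (s : ℝ) : ℝ :=
  -0.678455829 + 1.416154284*s - 0.927369747*s^2 + 0.273967029*s^3 - 0.032282324*s^4

lemma trap {y : ℝ} (hy : 1 ≤ y) : Real.log y ≤ (y^2 - 1)/(2*y) := by
  rcases eq_or_lt_of_le hy with h | h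
  · rw [← h]; norm_num
  · have h0 : (0:ℝ) < y := by linarith
    have ht : 0 < Real.log y := Real.log_pos h
    have hs : Real.log y < Real.sinh (Real.log y) := Real.self_lt_sinh_iff.mpr ht
    rw [Real.sinh_eq, Real.exp_log h0, Real.exp_neg, Real.exp_log h0] at hs
    have he : (y - y⁻¹)/2 = (y^2 - 1)/(2*y) := by field_simp
    linarith [hs, he.ge]

lemma trap' {n d : ℝ} (hd : 0 < d) (h : d ≤ n) :
    Real.log (n/d) ≤ (n^2 - d^2)/(2*(n*d)) := by
  have hn : 0 < n := lt_of_lt_of_le hd h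
  have h1 : (1:ℝ) ≤ n/d := (one_le_div hd).mpr h
  calc Real.log (n/d) ≤ ((n/d)^2 - 1)/(2*(n/d)) := trap h1
  _ = (n^2 - d^2)/(2*(n*d)) := by field_simp

lemma bern {s p q : ℝ} (hp : p ≤ s) (hq : s ≤ q) (i j : ℕ) : 0 ≤ (s-p)^i * (q-s)^j :=
  mul_nonneg (pow_nonneg (by linarith) _) (pow_nonneg (by linarith) _)

set_option maxHeartbeats 2000000 in
lemma key {s : ℝ} (h2 : 2 ≤ s) (hu : s ≤ 3.02381) :
    Real.log ((s+1)*(4.02381-s)/4.02381) ≤ s * pp s := by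
  have hvA : (4.02381:ℝ) ≤ vv s := by
    simp only [vv]
    nlinarith [mul_nonneg (by linarith : (0:ℝ) ≤ s) (by linarith : (0:ℝ) ≤ 3.02381 - s)]
  have hv0 : (0:ℝ) < vv s := by linarith
  have hm1 : (0:ℝ) < vv s + 2*4.02381 := by linarith
  have hm2 : (0:ℝ) < 2*vv s + 4.02381 := by linarith
  have h3v : (0:ℝ) < 3*vv s := by linarith
  have hprod : ((vv s + 2*4.02381)/(3*4.02381)) * ((2*vv s + 4.02381)/(vv s + 2*4.02381))
      * ((3*vv s)/(2*vv s + 4.02381)) = vv s/4.02381 := by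
    rw [div_mul_div_comm, div_mul_div_comm,
      div_eq_div_iff (by positivity) (by norm_num)]
    ring
  have hsplit : Real.log (vv s/4.02381) =
      Real.log ((vv s + 2*4.02381)/(3*4.02381)) + Real.log ((2*vv s + 4.02381)/(vv s + 2*4.02381))
        + Real.log ((3*vv s)/(2*vv s + 4.02381)) := by
    rw [← hprod, Real.log_mul (by positivity) (by positivity),
      Real.log_mul (by positivity) (by positivity)]
  have e1 : Real.log ((vv s + 2*4.02381)/(3*4.02381)) ≤ r1 s := by
    refine (trap' (by norm_num) (by linarith)).trans ?_
    rw [div_le_iff₀ (by nlinarith)]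
    simp only [vv, r1]
    linarith [bern h2 hu 0 6, bern h2 hu 1 5, bern h2 hu 2 4, bern h2 hu 3 3,
      bern h2 hu 4 2, bern h2 hu 5 1, bern h2 hu 6 0]
  have e2 : Real.log ((2*vv s + 4.02381)/(vv s + 2*4.02381)) ≤ r2 s := by
    refine (trap' hm1 (by linarith)).trans ?_
    rw [div_le_iff₀ (by nlinarith)]
    simp only [vv, r2]
    rcases le_total s 2.5 with hm | hm
    · linarith [bern h2 hm 0 8, bern h2 hm 1 7, bern h2 hm 2 6, bern h2 hm 3 5,
        bern h2 hm 4 4, bern h2 hm 5 3, bern h2 hm 6 2, bern h2 hm 7 1, bern h2 hm 8 0]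
    · linarith [bern hm hu 0 8, bern hm hu 1 7, bern hm hu 2 6, bern hm hu 3 5,
        bern hm hu 4 4, bern hm hu 5 3, bern hm hu 6 2, bern hm hu 7 1, bern hm hu 8 0]
  have e3 : Real.log ((3*vv s)/(2*vv s + 4.02381)) ≤ r3 s := by
    refine (trap' hm2 (by linarith)).trans ?_
    rw [div_le_iff₀ (by nlinarith)]
    simp only [vv, r3]
    rcases le_total s 2.5 with hm | hm
    · linarith [bern h2 hm 0 8, bern h2 hm 1 7, bern h2 hm 2 6, bern h2 hm 3 5,
        bern h2 hm 4 4, bern h2 hm 5 3, bern h2 hm 6 2, bern h2 hm 7 1, bern h2 hm 8 0]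
    · linarith [bern hm hu 0 14, bern hm hu 1 13, bern hm hu 2 12, bern hm hu 3 11,
        bern hm hu 4 10, bern hm hu 5 9, bern hm hu 6 8, bern hm hu 7 7, bern hm hu 8 6,
        bern hm hu 9 5, bern hm hu 10 4, bern hm hu 11 3, bern hm hu 12 2, bern hm hu 13 1,
        bern hm hu 14 0]
  have efin : r1 s + r2 s + r3 s ≤ s * pp s := by
    simp only [r1, r2, r3, pp]
    linarith [bern h2 hu 0 8, bern h2 hu 1 7, bern h2 hu 2 6, bern h2 hu 3 5,
      bern h2 hu 4 4, bern h2 hu 5 3, bern h2 hu 6 2, bern h2 hu 7 1, bern h2 hu 8 0]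
  calc Real.log ((s+1)*(4.02381-s)/4.02381) = Real.log (vv s/4.02381) := by rw [vv]
  _ ≤ r1 s + r2 s + r3 s := by rw [hsplit]; exact add_le_add (add_le_add e1 e2) e3
  _ ≤ s * pp s := efin


open MeasureTheory Set intervalIntegral

noncomputable def PP (s : ℝ) : ℝ :=
  -0.4230853698 + 0.418260281*s + 0.0684562765*s^2 - 0.082938806*s^3
    + 0.0215593575*s^4 - 0.0022517392*s^5
noncomputable def QQ (s : ℝ) : ℝ :=
  0.74895709232 - 0.4230853698*s - 0.0024125444*s^2 + 0.0212103959*s^3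
    - 0.004826904575*s^4 + 0.00045034784*s^5
noncomputable def qd (s : ℝ) : ℝ :=
  -0.4230853698 - 0.0048250888*s + 0.0636311877*s^2 - 0.0193076183*s^3 + 0.0022517392*s^4

noncomputable def f1 (s : ℝ) : ℝ := Real.log (s - 1) / s * Real.log (4.02381 / (s + 1))
noncomputable def f2 (s : ℝ) : ℝ :=
  Real.log (s - 1) / s * Real.log (4.02381 * (4.02381 - s) / (s + 1))
noncomputable def G (s : ℝ) : ℝ :=
  Real.log (s - 1) / s * Real.log ((s+1) * (4.02381 - s) / 4.02381)
noncomputable def HH (s : ℝ) : ℝ := Real.log (s - 1) * pp s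

lemma hlog2u : Real.log 2.02381 ≤ 0.7049819 := by
  have h1 : (2.02381:ℝ) = 2 * 1.011905 := by norm_num
  have hser := Real.abs_log_sub_add_sum_range_le (x := (-0.011905 : ℝ)) (by
    rw [abs_of_nonpos (by norm_num)]; norm_num) 3
  have habs : |(-0.011905 : ℝ)| = 0.011905 := by rw [abs_of_nonpos (by norm_num)]; norm_num
  rw [habs] at hser
  have h1m : (1 - (-0.011905) : ℝ) = 1.011905 := by norm_num
  rw [h1m] at hser
  rw [Finset.sum_range_succ, Finset.sum_range_succ, Finset.sum_range_succ,
    Finset.sum_range_zero] at hser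
  norm_num at hser
  rcases abs_le.mp hser with ⟨hl, hr⟩
  rw [h1, Real.log_mul (by norm_num) (by norm_num)]
  have hlog2 : Real.log 2 < 0.6931471808 := Real.log_two_lt_d9
  linarith

lemma hlogc : (0.0335499 : ℝ) ≤ Real.log 1.03411917 := by
  have hser := Real.abs_log_sub_add_sum_range_le (x := (-0.03411917 : ℝ)) (by
    rw [abs_of_nonpos (by norm_num)]; norm_num) 4
  have habs : |(-0.03411917 : ℝ)| = 0.03411917 := by rw [abs_of_nonpos (by norm_num)]; norm_num
  rw [habs] at hser
  have h1m : (1 - (-0.03411917) : ℝ) = 1.03411917 := by norm_num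
  rw [h1m] at hser
  rw [Finset.sum_range_succ, Finset.sum_range_succ, Finset.sum_range_succ,
    Finset.sum_range_succ, Finset.sum_range_zero] at hser
  norm_num at hser
  rcases abs_le.mp hser with ⟨hl, hr⟩
  linarith

lemma h6 : PP 3.02381 * Real.log 2.02381 + QQ 3.02381 ≤ 0.0316966 := by
  have hPu : (0:ℝ) ≤ PP 3.02381 := by unfold PP; norm_num
  have h1 := mul_le_mul_of_nonneg_left hlog2u hPu
  have h2 : PP 3.02381 * 0.7049819 + QQ 3.02381 ≤ 0.0316966 := by unfold PP QQ; norm_num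
  linarith

lemma contL : ContinuousOn (fun s : ℝ => Real.log (s - 1) / s) (Icc 2 3.02381) := by
  apply ContinuousOn.div
  · exact ContinuousOn.log ((continuous_id.sub continuous_const).continuousOn)
      (fun x hx => by rw [mem_Icc] at hx; exact ne_of_gt (by linarith))
  · exact continuous_id.continuousOn
  · intro x hx; rw [mem_Icc] at hx; exact ne_of_gt (by linarith)

lemma contf1 : ContinuousOn f1 (Icc 2 3.02381) := by
  apply contL.mul
  apply ContinuousOn.log
  · exact (continuousOn_const.div ((continuous_id.add continuous_const).continuousOn)
      (fun x hx => by rw [mem_Icc] at hx; exact ne_of_gt (by linarith)))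
  · intro x hx; rw [mem_Icc] at hx
    have : (0:ℝ) < 4.02381 / (x + 1) := by
      apply div_pos (by norm_num); linarith
    exact ne_of_gt this

lemma contf2 : ContinuousOn f2 (Icc 2 3.02381) := by
  apply contL.mul
  apply ContinuousOn.log
  · apply ContinuousOn.div
    · exact (continuous_const.mul (continuous_const.sub continuous_id)).continuousOn
    · exact (continuous_id.add continuous_const).continuousOn
    · intro x hx; rw [mem_Icc] at hx; exact ne_of_gt (by linarith)
  · intro x hx; rw [mem_Icc] at hx
    have : (0:ℝ) < 4.02381 * (4.02381 - x) / (x + 1) := by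
      apply div_pos; nlinarith; linarith
    exact ne_of_gt this

lemma contG : ContinuousOn G (Icc 2 3.02381) := by
  apply contL.mul
  apply ContinuousOn.log
  · apply ContinuousOn.div
    · exact ((continuous_id.add continuous_const).mul
        (continuous_const.sub continuous_id)).continuousOn
    · exact continuous_const.continuousOn
    · intro x hx; norm_num
  · intro x hx; rw [mem_Icc] at hx
    have : (0:ℝ) < (x+1) * (4.02381 - x) / 4.02381 := by
      apply div_pos; nlinarith; norm_num
    exact ne_of_gt this

lemma contHH : ContinuousOn HH (Icc 2 3.02381) := by
  apply ContinuousOn.mul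
  · exact ContinuousOn.log ((continuous_id.sub continuous_const).continuousOn)
      (fun x hx => by rw [mem_Icc] at hx; exact ne_of_gt (by linarith))
  · unfold pp; fun_prop

lemma uIcc_eq : (Set.uIcc (2:ℝ) 3.02381) = Icc 2 3.02381 := uIcc_of_le (by norm_num)

lemma intf1 : IntervalIntegrable f1 volume 2 3.02381 :=
  (uIcc_eq ▸ contf1).intervalIntegrable
lemma intf2 : IntervalIntegrable f2 volume 2 3.02381 :=
  (uIcc_eq ▸ contf2).intervalIntegrable
lemma intG : IntervalIntegrable G volume 2 3.02381 :=
  (uIcc_eq ▸ contG).intervalIntegrable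
lemma intHH : IntervalIntegrable HH volume 2 3.02381 :=
  (uIcc_eq ▸ contHH).intervalIntegrable

lemma hFTC : ∫ s in (2:ℝ)..3.02381, HH s = PP 3.02381 * Real.log 2.02381 + QQ 3.02381 := by
  have hder : ∀ x ∈ Set.uIcc (2:ℝ) 3.02381,
      HasDerivAt (fun y => PP y * Real.log (y - 1) + QQ y) (HH x) x := by
    intro x hx
    rw [uIcc_eq, mem_Icc] at hx
    have hx1 : x - 1 ≠ 0 := ne_of_gt (by linarith)
    have hP : HasDerivAt PP (pp x) x := by
      unfold PP pp
      have h := (((((hasDerivAt_const x (-0.4230853698:ℝ)).add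
        ((hasDerivAt_id x).const_mul (0.418260281:ℝ))).add
        ((hasDerivAt_pow 2 x).const_mul (0.0684562765:ℝ))).sub
        ((hasDerivAt_pow 3 x).const_mul (0.082938806:ℝ))).add
        ((hasDerivAt_pow 4 x).const_mul (0.0215593575:ℝ))).sub
        ((hasDerivAt_pow 5 x).const_mul (0.0022517392:ℝ))
      refine h.congr_deriv ?_
      push_cast; ring
    have hQ : HasDerivAt QQ (qd x) x := by
      unfold QQ qd
      have h := (((((hasDerivAt_const x (0.74895709232:ℝ)).sub
        ((hasDerivAt_id x).const_mul (0.4230853698:ℝ))).sub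
        ((hasDerivAt_pow 2 x).const_mul (0.0024125444:ℝ))).add
        ((hasDerivAt_pow 3 x).const_mul (0.0212103959:ℝ))).sub
        ((hasDerivAt_pow 4 x).const_mul (0.004826904575:ℝ))).add
        ((hasDerivAt_pow 5 x).const_mul (0.00045034784:ℝ))
      refine h.congr_deriv ?_
      push_cast; ring
    have hL : HasDerivAt (fun y : ℝ => Real.log (y - 1)) ((x-1)⁻¹ * 1) x :=
      by have := (Real.hasDerivAt_log hx1).comp x ((hasDerivAt_id' x).sub_const 1); exact this
    have h := (hP.mul hL).add hQ
    have hval : pp x * Real.log (x - 1) + PP x * ((x-1)⁻¹ * 1) + qd x = HH x := by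
      have hiden : PP x * ((x-1)⁻¹ * 1) + qd x = 0 := by
        have hPQ : PP x = -(x-1) * qd x := by unfold PP qd; ring
        rw [hPQ]; field_simp; ring
      unfold HH; linarith [hiden, (by ring : pp x * Real.log (x-1) + (PP x * ((x-1)⁻¹ * 1) + qd x)
        = pp x * Real.log (x-1) + PP x * ((x-1)⁻¹ * 1) + qd x)]
    rw [← hval]
    exact h
  have h := integral_eq_sub_of_hasDerivAt hder intHH
  rw [h]
  have e1 : (3.02381:ℝ) - 1 = 2.02381 := by norm_num
  have e2 : (2:ℝ) - 1 = 1 := by norm_num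
  rw [e1, e2, Real.log_one]
  have e3 : QQ 2 = 0 := by unfold QQ; norm_num
  rw [e3]
  ring

theorem delta1_minus_half_delta2 : Δ₁ - (1 / 2) * Δ₂ ≥ 0.0009 := by
  have hΔ1 : Δ₁ = Real.log 4.02381 + ∫ s in (2:ℝ)..3.02381, f1 s := by
    unfold Δ₁ f1; norm_num
  have hΔ2 : Δ₂ = Real.log (4.02381^2/1.03411917) + ∫ s in (2:ℝ)..3.02381, f2 s := by
    unfold Δ₂ f2; norm_num
  have hlogb : Real.log (4.02381^2/1.03411917)
      = 2*Real.log 4.02381 - Real.log 1.03411917 := by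
    rw [Real.log_div (by norm_num) (by norm_num), Real.log_pow]; push_cast; ring
  have hcongr : Set.EqOn (fun s => f2 s - 2*f1 s) G (Set.uIcc (2:ℝ) 3.02381) := by
    intro x hx
    rw [uIcc_eq, mem_Icc] at hx
    simp only [f1, f2, G]
    have h1 : (0:ℝ) < x+1 := by linarith [hx.1]
    have h2 : (0:ℝ) < 4.02381 - x := by linarith [hx.2]
    have e1 : Real.log (4.02381/(x+1)) = Real.log 4.02381 - Real.log (x+1) := by
      rw [Real.log_div (by norm_num) (by positivity)]
    have e2 : Real.log (4.02381*(4.02381-x)/(x+1))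
        = Real.log 4.02381 + Real.log (4.02381-x) - Real.log (x+1) := by
      rw [Real.log_div (by positivity) (by positivity),
        Real.log_mul (by norm_num) (by positivity)]
    have e3 : Real.log ((x+1)*(4.02381-x)/4.02381)
        = Real.log (x+1) + Real.log (4.02381-x) - Real.log 4.02381 := by
      rw [Real.log_div (by positivity) (by norm_num),
        Real.log_mul (by positivity) (by positivity)]
    show f2 x - 2*f1 x = _
    simp only [f1, f2, G]
    rw [e1, e2, e3]; ring
  have hIG : ∫ s in (2:ℝ)..3.02381, G s
      = (∫ s in (2:ℝ)..3.02381, f2 s) - 2*∫ s in (2:ℝ)..3.02381, f1 s := by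
    rw [← intervalIntegral.integral_congr hcongr,
      intervalIntegral.integral_sub intf2 (intf1.const_mul 2),
      intervalIntegral.integral_const_mul]
  have hmono : ∫ s in (2:ℝ)..3.02381, G s ≤ ∫ s in (2:ℝ)..3.02381, HH s := by
    apply intervalIntegral.integral_mono_on (by norm_num) intG intHH
    intro x hx
    rw [mem_Icc] at hx
    obtain ⟨ha, hb⟩ := hx
    have hx0 : (0:ℝ) < x := by linarith
    have hL0 : (0:ℝ) ≤ Real.log (x-1) := Real.log_nonneg (by linarith)
    have hkey := key ha hb
    have hGx : G x = Real.log (x-1) * (Real.log ((x+1)*(4.02381-x)/4.02381) / x) := by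
      simp only [G]; ring
    rw [hGx]
    show _ ≤ HH x
    simp only [HH]
    apply mul_le_mul_of_nonneg_left _ hL0
    rw [div_le_iff₀ hx0]
    linarith [hkey]
  have hK : (∫ s in (2:ℝ)..3.02381, f2 s) - 2*∫ s in (2:ℝ)..3.02381, f1 s ≤ 0.0316966 := by
    rw [← hIG]
    calc ∫ s in (2:ℝ)..3.02381, G s ≤ ∫ s in (2:ℝ)..3.02381, HH s := hmono
    _ = PP 3.02381 * Real.log 2.02381 + QQ 3.02381 := hFTC
    _ ≤ 0.0316966 := h6
  rw [ge_iff_le, hΔ1, hΔ2, hlogb]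
  linarith [hlogc, hK]
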